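/- Let X be a real or complex Banach space and let (x_n) be a complemented unconditional basic sequence in X with projecting functionals (x*_n). Let (y*_n) be a sequence in X* with ∑_{n=1}^∞ ‖y*_n − x*_n‖·‖x_n‖ < 1. Then there exists a bicontinuous linear automorphism S of X such that the sequence y_n := S(x_n) (which is congruent to (x_n)) satisfies: y*_k(y_n) = δ_{kn} for all k, n; there is a constant C with ‖∑_{n∈A} y*_n(f) y_n‖ ≤ C‖f‖ for every f ∈ X and finite A ⊆ ℕ; and for every f ∈ X the series ∑_{n=1}^∞ y*_n(f) y_n converges in norm and defines a bounded linear projection of X onto the closed linear span of (y_n). That is, (y_n) is a complemented unconditional basic sequence with projecting functionals (y*_n). -/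

import Mathlib

open Filter Topology

/-- A sequence `x` in a Banach space, together with functionals `xs` in the dual, is a
*complemented unconditional basic sequence with projecting functionals* `xs` if they are
biorthogonal, the partial-sum projections `f ↦ ∑_{n ∈ A} xs n f • x n` are uniformly bounded,
and for every `f` the series `∑ xs n f • x n` converges in norm, defining a bounded linear
projection of the space onto the closed linear span of `x`. -/
def IsComplUncondBasicSeq (𝕜 : Type*) [RCLike 𝕜] {U : Type*} [NormedAddCommGroup U]
    [NormedSpace 𝕜 U] (x : ℕ → U) (xs : ℕ → U →L[𝕜] 𝕜) : Prop :=
  (∀ k n, xs k (x n) = if k = n then 1 else 0) ∧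
  (∃ C : ℝ, ∀ (f : U) (A : Finset ℕ), ‖∑ n ∈ A, xs n f • x n‖ ≤ C * ‖f‖) ∧
  (∃ P : U →L[𝕜] U,
    (∀ f : U, Tendsto (fun m => ∑ n ∈ Finset.range m, xs n f • x n) atTop (𝓝 (P f))) ∧
    (∀ f, P (P f) = P f) ∧
    LinearMap.range (P : U →ₗ[𝕜] U) = (Submodule.span 𝕜 (Set.range x)).topologicalClosure)

section aux
variable {𝕜 : Type*} [RCLike 𝕜] {X : Type*} [NormedAddCommGroup X]
    [NormedSpace 𝕜 X] [CompleteSpace X]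

omit [CompleteSpace X] in
lemma aux_norm_summable (x : ℕ → X) (xs ys : ℕ → X →L[𝕜] 𝕜)
    (hsum : Summable fun n => ‖ys n - xs n‖ * ‖x n‖) (f : X) :
    Summable fun n => ‖((ys n - xs n) f) • x n‖ := by
  apply Summable.of_nonneg_of_le (fun n => norm_nonneg _)
    (fun n => ?_) (hsum.mul_right ‖f‖)
  rw [norm_smul]
  calc ‖(ys n - xs n) f‖ * ‖x n‖ ≤ (‖ys n - xs n‖ * ‖f‖) * ‖x n‖ := by
        gcongr; exact (ys n - xs n).le_opNorm f
    _ = ‖ys n - xs n‖ * ‖x n‖ * ‖f‖ := by ring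

end aux

/-- dual small perturbation principle. Let `x` be a complemented unconditional
basic sequence in a Banach space `X` with projecting functionals `xs`, and let `ys ⊂ X*`
satisfy `∑ ‖ys n - xs n‖ * ‖x n‖ < 1`. Then there is a bicontinuous linear automorphism `S` of
`X` such that the sequence `y n := S (x n)`, which is congruent to `x`, is a complemented
unconditional basic sequence with projecting functionals `ys`. -/



theorem statement5 {𝕜 : Type*} [RCLike 𝕜] {X : Type*} [NormedAddCommGroup X]
    [NormedSpace 𝕜 X] [CompleteSpace X]
    (x : ℕ → X) (xs ys : ℕ → X →L[𝕜] 𝕜)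
    (hx : IsComplUncondBasicSeq 𝕜 x xs)
    (hsum : Summable fun n => ‖ys n - xs n‖ * ‖x n‖)
    (hlt : ∑' n, ‖ys n - xs n‖ * ‖x n‖ < 1) :
    ∃ S : X ≃L[𝕜] X, IsComplUncondBasicSeq 𝕜 (fun n => S (x n)) ys := by
  obtain ⟨hbi, ⟨C, hC⟩, ⟨P, hPtend, hPP, hPrange⟩⟩ := hx
  have hsn : ∀ f : X, Summable fun n => ‖((ys n - xs n) f) • x n‖ :=
    aux_norm_summable x xs ys hsum
  have hsf : ∀ f : X, Summable fun n => ((ys n - xs n) f) • x n :=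
    fun f => (hsn f).of_norm
  -- the perturbation operator A
  set c := ∑' n, ‖ys n - xs n‖ * ‖x n‖ with hc
  have hc0 : 0 ≤ c := tsum_nonneg fun n => mul_nonneg (norm_nonneg _) (norm_nonneg _)
  let A₀ : X →ₗ[𝕜] X :=
    { toFun := fun f => ∑' n, ((ys n - xs n) f) • x n
      map_add' := fun f g => by
        rw [← Summable.tsum_add (hsf f) (hsf g)]
        exact tsum_congr fun n => by rw [map_add, add_smul]
      map_smul' := fun a f => by
        simp only [RingHom.id_apply]
        show (∑' n, ((ys n - xs n) (a • f)) • x n) = a • ∑' n, ((ys n - xs n) f) • x n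
        rw [← tsum_const_smul'' a]
        exact tsum_congr fun n => by rw [map_smul, smul_smul, smul_eq_mul] }
  have hA0bound : ∀ f : X, ‖A₀ f‖ ≤ c * ‖f‖ := by
    intro f
    calc ‖∑' n, ((ys n - xs n) f) • x n‖ ≤ ∑' n, ‖((ys n - xs n) f) • x n‖ :=
          norm_tsum_le_tsum_norm (hsn f)
      _ ≤ ∑' n, (‖ys n - xs n‖ * ‖x n‖) * ‖f‖ := by
          apply Summable.tsum_le_tsum _ (hsn f) (hsum.mul_right ‖f‖)
          intro n
          rw [norm_smul]
          calc ‖(ys n - xs n) f‖ * ‖x n‖ ≤ (‖ys n - xs n‖ * ‖f‖) * ‖x n‖ := by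
                gcongr; exact (ys n - xs n).le_opNorm f
            _ = ‖ys n - xs n‖ * ‖x n‖ * ‖f‖ := by ring
      _ = c * ‖f‖ := by rw [tsum_mul_right]
  let A : X →L[𝕜] X := A₀.mkContinuous c hA0bound
  have hAnorm : ‖A‖ < 1 :=
    lt_of_le_of_lt (A₀.mkContinuous_norm_le hc0 hA0bound) hlt
  have hAneg : ‖(-A : X →L[𝕜] X)‖ < 1 := by rwa [norm_neg]
  let u : (X →L[𝕜] X)ˣ := Units.oneSub (-A) hAneg
  let E : X ≃L[𝕜] X := ContinuousLinearEquiv.ofUnit u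
  have hEapp : ∀ f : X, E f = f + ∑' n, ((ys n - xs n) f) • x n := by
    intro f
    show (u.val) f = _
    rw [Units.val_oneSub, sub_neg_eq_add]
    rfl
  -- key identity
  have hkey : ∀ (k : ℕ) (f : X), xs k (E f) = ys k f := by
    intro k f
    rw [hEapp, map_add, ContinuousLinearMap.map_tsum _ (hsf f)]
    have : ∀ n, xs k (((ys n - xs n) f) • x n) = if n = k then ((ys k - xs k) f) else 0 := by
      intro n
      rw [map_smul, smul_eq_mul, hbi k n]
      by_cases h : n = k
      · subst h; simp
      · simp [Ne.symm h, h]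
    rw [tsum_congr this, tsum_ite_eq]
    simp
  -- the automorphism
  refine ⟨E.symm, ?_, ?_, ?_⟩
  · -- biorthogonality
    intro k n
    have := hkey k (E.symm (x n))
    rw [E.apply_symm_apply] at this
    rw [← this, hbi]
  · -- uniform bound
    set C' := max C 0 with hC'def
    have hC'0 : 0 ≤ C' := le_max_right C 0
    have hC' : ∀ (f : X) (A : Finset ℕ), ‖∑ n ∈ A, xs n f • x n‖ ≤ C' * ‖f‖ := fun f A =>
      (hC f A).trans (mul_le_mul_of_nonneg_right (le_max_left C 0) (norm_nonneg f))
    refine ⟨‖(E.symm : X →L[𝕜] X)‖ * C' * ‖(E : X →L[𝕜] X)‖, fun f A => ?_⟩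
    have h1 : ∀ n, ys n f = xs n (E f) := fun n => (hkey n f).symm
    have h2 : (∑ n ∈ A, ys n f • E.symm (x n)) = E.symm (∑ n ∈ A, xs n (E f) • x n) := by
      rw [map_sum]
      exact Finset.sum_congr rfl fun n _ => by rw [h1, map_smul]
    calc ‖∑ n ∈ A, ys n f • E.symm (x n)‖ = ‖E.symm (∑ n ∈ A, xs n (E f) • x n)‖ := by rw [h2]
      _ ≤ ‖(E.symm : X →L[𝕜] X)‖ * ‖∑ n ∈ A, xs n (E f) • x n‖ :=
          (E.symm : X →L[𝕜] X).le_opNorm _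
      _ ≤ ‖(E.symm : X →L[𝕜] X)‖ * (C' * ‖E f‖) :=
          mul_le_mul_of_nonneg_left (hC' (E f) A) (norm_nonneg _)
      _ ≤ ‖(E.symm : X →L[𝕜] X)‖ * (C' * (‖(E : X →L[𝕜] X)‖ * ‖f‖)) :=
          mul_le_mul_of_nonneg_left
            (mul_le_mul_of_nonneg_left ((E : X →L[𝕜] X).le_opNorm f) hC'0) (norm_nonneg _)
      _ = ‖(E.symm : X →L[𝕜] X)‖ * C' * ‖(E : X →L[𝕜] X)‖ * ‖f‖ := by ring
  · -- projection
    let Q : X →L[𝕜] X := (E.symm : X →L[𝕜] X).comp (P.comp (E : X →L[𝕜] X))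
    refine ⟨Q, fun f => ?_, fun f => ?_, ?_⟩
    · have h1 : ∀ m, (∑ n ∈ Finset.range m, ys n f • E.symm (x n)) =
          E.symm (∑ n ∈ Finset.range m, xs n (E f) • x n) := by
        intro m
        rw [map_sum]
        exact Finset.sum_congr rfl fun n _ => by rw [← hkey, map_smul]
      simp only [h1]
      exact (E.symm.continuous.tendsto _).comp (hPtend (E f))
    · show E.symm (P (E (E.symm (P (E f))))) = E.symm (P (E f))
      rw [E.apply_symm_apply, hPP]
    · have hr : LinearMap.range (Q : X →ₗ[𝕜] X) = Submodule.map (E.symm : X →ₗ[𝕜] X) (LinearMap.range (P : X →ₗ[𝕜] X)) := by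
        ext v
        constructor
        · rintro ⟨g, rfl⟩
          exact ⟨P (E g), ⟨E g, rfl⟩, rfl⟩
        · rintro ⟨w, ⟨g, rfl⟩, rfl⟩
          exact ⟨E.symm g, by simp [Q]⟩
      rw [hr, hPrange]
      apply SetLike.coe_injective
      rw [Submodule.map_coe]
      have himg : (E.symm : X →ₗ[𝕜] X) '' closure (Submodule.span 𝕜 (Set.range x)) =
          closure ((E.symm : X →ₗ[𝕜] X) '' (Submodule.span 𝕜 (Set.range x))) :=
        E.symm.toHomeomorph.image_closure _
      rw [Submodule.topologicalClosure_coe, himg, Submodule.topologicalClosure_coe]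
      rw [← Submodule.map_coe, Submodule.map_span, ← Set.range_comp]
      rfl
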